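/- Let (R,σ) be a difference ring and I a σ-ideal that is well-mixed (ab∈I implies a·σ(b)∈I). Then the perfect closure of I equals {a ∈ R : a^ν ∈ I for some nonzero ν ∈ ℕ[σ]}, i.e., the set of a such that some product of iterates a·σ(a)^{n₁}·σ²(a)^{n₂}···(with total exponent ≥ 1) lies in I, and this set is a perfect ideal. -/

import Mathlib

/-- The action of a difference operator `ν ∈ ℕ[σ]` on an element `a`:
`a^ν = ∏ᵢ σⁱ(a)^{νᵢ}`. -/
noncomputable def diffOpApply {R : Type*} [CommRing R] (σ : R →+* R)
    (ν : ℕ →₀ ℕ) (a : R) : R :=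
  ν.prod fun i k => ((⇑σ)^[i] a) ^ k

section Aux

variable {R : Type*} [CommRing R] (σ : R →+* R)

private lemma diffOpApply_multiset (m : Multiset ℕ) (a : R) :
    diffOpApply σ m.toFinsupp a = (m.map fun i => (⇑σ)^[i] a).prod := by
  induction m using Multiset.induction with
  | empty => simp [diffOpApply]
  | cons i m ih =>
    have h1 : (i ::ₘ m).toFinsupp = Finsupp.single i 1 + m.toFinsupp := by
      rw [← Multiset.singleton_add, map_add, Multiset.toFinsupp_singleton]
    rw [h1, diffOpApply, Finsupp.prod_add_index' (fun _ => pow_zero _) (fun _ _ _ => pow_add _ _ _),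
      Multiset.map_cons, Multiset.prod_cons, ← ih]
    simp [Finsupp.prod_single_index, diffOpApply]

private lemma diffOpApply_eq (ν : ℕ →₀ ℕ) (a : R) :
    diffOpApply σ ν a = (ν.toMultiset.map fun i => (⇑σ)^[i] a).prod := by
  conv_lhs => rw [← Finsupp.toMultiset_toFinsupp ν]
  exact diffOpApply_multiset σ _ a

private lemma multiset_list_prod (m : Multiset ℕ) (f : ℕ → R) :
    (m.toList.map f).prod = (m.map f).prod := by
  conv_rhs => rw [← Multiset.coe_toList m]
  rw [Multiset.map_coe, Multiset.prod_coe]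

private lemma le_foldr_max : ∀ (l : List ℕ), ∀ i ∈ l, i ≤ l.foldr max 0 := by
  intro l
  induction l with
  | nil => simp
  | cons j l ih =>
    intro i hi
    rcases List.mem_cons.1 hi with rfl | hi
    · exact le_max_left _ _
    · exact le_trans (ih i hi) (le_max_right _ _)

variable {σ} {I : Ideal R}

private lemma mem_shift (hwm : ∀ a b : R, a * b ∈ I → a * σ b ∈ I) (x b : R)
    (h : x * b ∈ I) (k : ℕ) : x * (⇑σ)^[k] b ∈ I := by
  induction k with
  | zero => simpa using h
  | succ k ih => rw [Function.iterate_succ_apply']; exact hwm _ _ ih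

private lemma list_shift (hwm : ∀ a b : R, a * b ∈ I → a * σ b ∈ I) (a : R) :
    ∀ {l l' : List ℕ}, List.Forall₂ (· ≤ ·) l l' →
      ∀ x : R, x * (l.map fun i => (⇑σ)^[i] a).prod ∈ I →
        x * (l'.map fun i => (⇑σ)^[i] a).prod ∈ I := by
  intro l l' hrel
  induction hrel with
  | nil => intro x h; exact h
  | @cons i j l l' hij _ ih =>
    intro x h
    simp only [List.map_cons, List.prod_cons] at h ⊢
    have h1 : (x * (l.map fun i => (⇑σ)^[i] a).prod) * (⇑σ)^[i] a ∈ I := by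
      have e : (x * (l.map fun i => (⇑σ)^[i] a).prod) * (⇑σ)^[i] a
          = x * ((⇑σ)^[i] a * (l.map fun i => (⇑σ)^[i] a).prod) := by ring
      rw [e]; exact h
    have h2 := mem_shift hwm _ _ h1 (j - i)
    rw [← Function.iterate_add_apply, Nat.sub_add_cancel hij] at h2
    have h3 : (x * (⇑σ)^[j] a) * (l.map fun i => (⇑σ)^[i] a).prod ∈ I := by
      have e : (x * (⇑σ)^[j] a) * (l.map fun i => (⇑σ)^[i] a).prod
          = (x * (l.map fun i => (⇑σ)^[i] a).prod) * (⇑σ)^[j] a := by ring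
      rw [e]; exact h2
    have h4 := ih (x * (⇑σ)^[j] a) h3
    have e : x * ((⇑σ)^[j] a * (l'.map fun i => (⇑σ)^[i] a).prod)
        = (x * (⇑σ)^[j] a) * (l'.map fun i => (⇑σ)^[i] a).prod := by ring
    rw [e]; exact h4

/-- From one witness product in `I`, any product of the same number of high-enough
shifts of `a` lies in `I`. -/
private lemma key_S (hwm : ∀ a b : R, a * b ∈ I → a * σ b ∈ I) (a : R) (m : Multiset ℕ)
    (hm : (m.map fun i => (⇑σ)^[i] a).prod ∈ I) :
    ∃ d : ℕ, ∀ m' : Multiset ℕ, Multiset.card m' = Multiset.card m →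
      (∀ i ∈ m', d ≤ i) → (m'.map fun i => (⇑σ)^[i] a).prod ∈ I := by
  refine ⟨m.toList.foldr max 0, fun m' hcard hge => ?_⟩
  have hrel : List.Forall₂ (· ≤ ·) m.toList m'.toList := by
    rw [List.forall₂_iff_get]
    refine ⟨by simp [hcard], fun i h1 h2 => ?_⟩
    exact le_trans (le_foldr_max _ _ (List.get_mem _ _))
      (hge _ (Multiset.mem_toList.1 (List.get_mem _ _)))
  have h0 : (1 : R) * (m.toList.map fun i => (⇑σ)^[i] a).prod ∈ I := by
    rw [one_mul, multiset_list_prod]; exact hm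
  have := list_shift hwm a hrel 1 h0
  rwa [one_mul, multiset_list_prod] at this

end Aux

/-- for a well-mixed `σ`-ideal `I` of a difference ring `(R, σ)`, the
perfect closure of `I` is exactly `{a : a^ν ∈ I for some nonzero ν ∈ ℕ[σ]}`, and this
set is a perfect `σ`-ideal. -/
theorem perfect_closure_of_well_mixed
    {R : Type*} [CommRing R] (σ : R →+* R) (hinj : Function.Injective σ)
    (I : Ideal R)
    (hσI : ∀ a ∈ I, σ a ∈ I)
    (hwm : ∀ a b : R, a * b ∈ I → a * σ b ∈ I) :
    ∃ J : Ideal R,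
      (J : Set R) = {a : R | ∃ ν : ℕ →₀ ℕ, ν ≠ 0 ∧ diffOpApply σ ν a ∈ I} ∧
      (∀ a ∈ J, σ a ∈ J) ∧
      (∀ (a : R) (ν : ℕ →₀ ℕ), ν ≠ 0 → diffOpApply σ ν a ∈ J → a ∈ J) ∧
      I ≤ J ∧
      (∀ J' : Ideal R, I ≤ J' → (∀ a ∈ J', σ a ∈ J') →
        (∀ (a : R) (ν : ℕ →₀ ℕ), ν ≠ 0 → diffOpApply σ ν a ∈ J' → a ∈ J') → J ≤ J') := by
  classical
  set Jc : Set R :=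
    {a : R | ∃ m : Multiset ℕ, m ≠ 0 ∧ (m.map fun i => (⇑σ)^[i] a).prod ∈ I} with hJc
  -- iterates are additive and multiplicative
  have hiter_add : ∀ (k : ℕ) (x y : R), (⇑σ)^[k] (x + y) = (⇑σ)^[k] x + (⇑σ)^[k] y := by
    intro k x y; rw [← RingHom.coe_pow]; exact map_add _ _ _
  have hiter_mul : ∀ (k : ℕ) (x y : R), (⇑σ)^[k] (x * y) = (⇑σ)^[k] x * (⇑σ)^[k] y := by
    intro k x y; rw [← RingHom.coe_pow]; exact map_mul _ _ _
  -- zero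
  have hzero : (0 : R) ∈ Jc := by
    refine ⟨{0}, by simp, ?_⟩
    simp
  -- closed under multiplication
  have hmul : ∀ (r a : R), a ∈ Jc → r * a ∈ Jc := by
    rintro r a ⟨m, hm0, hmI⟩
    refine ⟨m, hm0, ?_⟩
    have e : (m.map fun i => (⇑σ)^[i] (r * a))
        = m.map fun i => (⇑σ)^[i] r * (⇑σ)^[i] a := by
      apply Multiset.map_congr rfl
      intro i _
      exact hiter_mul i r a
    rw [e, Multiset.prod_map_mul]
    exact I.mul_mem_left _ hmI
  -- closed under addition
  have hadd : ∀ a b : R, a ∈ Jc → b ∈ Jc → a + b ∈ Jc := by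
    rintro a b ⟨m₁, hm₁0, hm₁I⟩ ⟨m₂, hm₂0, hm₂I⟩
    obtain ⟨d₁, hd₁⟩ := key_S hwm a m₁ hm₁I
    obtain ⟨d₂, hd₂⟩ := key_S hwm b m₂ hm₂I
    set e₁ := Multiset.card m₁ with he₁
    set e₂ := Multiset.card m₂ with he₂
    have he₁pos : 0 < e₁ := Multiset.card_pos.2 hm₁0
    have he₂pos : 0 < e₂ := Multiset.card_pos.2 hm₂0
    set d := max d₁ d₂ with hd
    set e := e₁ + e₂ with he
    set F : ℕ → R := fun t => (⇑σ)^[d + t] a with hF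
    set G : ℕ → R := fun t => (⇑σ)^[d + t] b with hG
    -- the product of e consecutive shifts of a+b lies in I
    have hP : (∏ t ∈ Finset.range e, (F t + G t)) ∈ I := by
      rw [Finset.prod_add]
      apply Ideal.sum_mem
      intro t ht
      have htsub : t ⊆ Finset.range e := Finset.mem_powerset.1 ht
      rcases le_or_gt e₁ t.card with hc | hc
      · -- enough a-factors
        obtain ⟨t₁, ht₁sub, ht₁card⟩ := Finset.exists_subset_card_eq hc
        have hmem : (∏ i ∈ t₁, F i) ∈ I := by
          have := hd₁ (t₁.val.map fun i => d + i)
            (by rw [Multiset.card_map]; exact ht₁card)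
            (by
              intro i hi
              obtain ⟨j, _, rfl⟩ := Multiset.mem_map.1 hi
              exact le_trans (le_max_left _ _) (Nat.le_add_right _ _))
          rw [Multiset.map_map] at this
          rw [Finset.prod_eq_multiset_prod]
          exact this
        have e1 : (∏ i ∈ t, F i) * ∏ i ∈ Finset.range e \ t, G i
            = ((∏ i ∈ t \ t₁, F i) * ∏ i ∈ Finset.range e \ t, G i) * ∏ i ∈ t₁, F i := by
          rw [← Finset.prod_sdiff ht₁sub]; ring
        rw [e1]
        exact I.mul_mem_left _ hmem
      · -- enough b-factors
        have hcard : e₂ ≤ (Finset.range e \ t).card := by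
          rw [Finset.card_sdiff_of_subset htsub, Finset.card_range]
          omega
        obtain ⟨t₂, ht₂sub, ht₂card⟩ := Finset.exists_subset_card_eq hcard
        have hmem : (∏ i ∈ t₂, G i) ∈ I := by
          have := hd₂ (t₂.val.map fun i => d + i)
            (by rw [Multiset.card_map]; exact ht₂card)
            (by
              intro i hi
              obtain ⟨j, _, rfl⟩ := Multiset.mem_map.1 hi
              exact le_trans (le_max_right _ _) (Nat.le_add_right _ _))
          rw [Multiset.map_map] at this
          rw [Finset.prod_eq_multiset_prod]
          exact this
        have e1 : (∏ i ∈ t, F i) * ∏ i ∈ Finset.range e \ t, G i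
            = ((∏ i ∈ t, F i) * ∏ i ∈ (Finset.range e \ t) \ t₂, G i) * ∏ i ∈ t₂, G i := by
          rw [← Finset.prod_sdiff ht₂sub]; ring
        rw [e1]
        exact I.mul_mem_left _ hmem
    -- package as a witness multiset for a + b
    refine ⟨(Finset.range e).val.map fun t => d + t, ?_, ?_⟩
    · intro h
      have : Multiset.card ((Finset.range e).val.map fun t => d + t) = 0 := by rw [h]; rfl
      rw [Multiset.card_map] at this
      have : e = 0 := by simpa [Finset.card_range] using this
      omega
    · rw [Multiset.map_map]
      have e2 : (((Finset.range e).val.map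
          ((fun i => (⇑σ)^[i] (a + b)) ∘ fun t => d + t))).prod
          = ∏ t ∈ Finset.range e, (F t + G t) := by
        rw [Finset.prod_eq_multiset_prod]
        apply congrArg
        apply Multiset.map_congr rfl
        intro t _
        exact hiter_add (d + t) a b
      rw [e2]
      exact hP
  set J : Ideal R :=
    { carrier := Jc
      zero_mem' := hzero
      add_mem' := fun ha hb => hadd _ _ ha hb
      smul_mem' := fun r a ha => by simpa using hmul r a ha } with hJ
  have hmemJ : ∀ a : R, a ∈ J ↔ a ∈ Jc := fun a => Iff.rfl
  -- carrier description in Finsupp terms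
  have hcarrier : (J : Set R) = {a : R | ∃ ν : ℕ →₀ ℕ, ν ≠ 0 ∧ diffOpApply σ ν a ∈ I} := by
    ext a
    constructor
    · rintro ⟨m, hm0, hmI⟩
      refine ⟨m.toFinsupp, ?_, ?_⟩
      · intro h
        apply hm0
        have := congrArg Finsupp.toMultiset h
        simpa using this
      · rw [diffOpApply_multiset]; exact hmI
    · rintro ⟨ν, hν0, hνI⟩
      refine ⟨ν.toMultiset, ?_, ?_⟩
      · intro h
        apply hν0
        have := congrArg Multiset.toFinsupp h
        simpa using this
      · rw [← diffOpApply_eq]; exact hνI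
  -- σ-stability
  have hσJ : ∀ a ∈ J, σ a ∈ J := by
    rintro a ⟨m, hm0, hmI⟩
    refine ⟨m, hm0, ?_⟩
    have h1 := hσI _ hmI
    rw [map_multiset_prod, Multiset.map_map] at h1
    have e : (m.map (⇑σ ∘ fun i => (⇑σ)^[i] a)) = m.map fun i => (⇑σ)^[i] (σ a) := by
      apply Multiset.map_congr rfl
      intro i _
      simp only [Function.comp_apply, ← Function.iterate_succ_apply' (⇑σ) i a,
        Function.iterate_succ_apply]
    rwa [e] at h1
  -- perfectness (multiset version)
  have hperfm : ∀ (a : R) (m : Multiset ℕ), m ≠ 0 →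
      (m.map fun i => (⇑σ)^[i] a).prod ∈ J → a ∈ J := by
    rintro a m hm0 ⟨m', hm'0, hI⟩
    set x := (m.map fun i => (⇑σ)^[i] a).prod with hx
    have hiterx : ∀ j : ℕ, (⇑σ)^[j] x = (m.map fun i => (⇑σ)^[j + i] a).prod := by
      intro j
      rw [hx, ← RingHom.coe_pow, map_multiset_prod, Multiset.map_map]
      apply congrArg
      apply Multiset.map_congr rfl
      intro i _
      simp only [Function.comp_apply, RingHom.coe_pow, Function.iterate_add_apply]
    refine ⟨m'.bind fun j => m.map fun i => j + i, ?_, ?_⟩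
    · obtain ⟨j, hj⟩ := Multiset.exists_mem_of_ne_zero hm'0
      obtain ⟨i, hi⟩ := Multiset.exists_mem_of_ne_zero hm0
      intro h
      have : (j + i) ∈ (m'.bind fun j => m.map fun i => j + i) :=
        Multiset.mem_bind.2 ⟨j, hj, Multiset.mem_map.2 ⟨i, hi, rfl⟩⟩
      rw [h] at this
      exact Multiset.notMem_zero _ this
    · rw [Multiset.map_bind, Multiset.prod_bind]
      have e : (m'.map fun j => ((m.map fun i => j + i).map fun i => (⇑σ)^[i] a).prod)
          = m'.map fun j => (⇑σ)^[j] x := by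
        apply Multiset.map_congr rfl
        intro j _
        rw [hiterx j, Multiset.map_map]
        rfl
      rw [e]
      exact hI
  refine ⟨J, hcarrier, hσJ, ?_, ?_, ?_⟩
  · -- perfectness, Finsupp version
    intro a ν hν0 hνJ
    apply hperfm a ν.toMultiset
    · intro h
      apply hν0
      have := congrArg Multiset.toFinsupp h
      simpa using this
    · rw [← diffOpApply_eq]; exact hνJ
  · -- I ≤ J
    intro a haI
    refine ⟨{0}, by simp, ?_⟩
    simpa using haI
  · -- minimality
    intro J' hIJ' _ hperf' a haJ
    have : a ∈ (J : Set R) := haJ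
    rw [hcarrier] at this
    obtain ⟨ν, hν0, hνI⟩ := this
    exact hperf' a ν hν0 (hIJ' hνI)
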